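/- Fix α ∈ (0.5, 0.8469) and k̂ = (0,−1). Let λ(ε) denote the unique positive eigenvalue of the viscous line-k̂ spectral problem for 0 < ε < ε_*(α), and let λ₀ denote the unique positive eigenvalue of the inviscid (ε = 0) line-k̂ operator. Then lim_{ε→0⁺} λ(ε) = λ₀; i.e., the unstable eigenvalue of the linearized Navier–Stokes operator persists in the zero viscosity limit and converges to the unstable eigenvalue of the linearized Euler operator. -/

import Mathlib

/-- The interaction coefficient
`A(q,r) = (α/2)·[1/(r₁²+(αr₂)²) − 1/(q₁²+(αq₂)²)]·(q₁r₂ − q₂r₁)`. -/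
noncomputable def coefA (α : ℝ) (q r : ℤ × ℤ) : ℝ :=
  (α / 2) * (1 / ((r.1 : ℝ) ^ 2 + (α * (r.2 : ℝ)) ^ 2)
      - 1 / ((q.1 : ℝ) ^ 2 + (α * (q.2 : ℝ)) ^ 2)) *
    ((q.1 : ℝ) * (r.2 : ℝ) - (q.2 : ℝ) * (r.1 : ℝ))

/-- The line-`k̂` spectral problem for the linearized 2D Navier–Stokes operator at
the shear `Ω = 2 cos x₁` (viscosity `ε ≥ 0`; `ε = 0` is the linearized Euler case). -/
def LineEqn (α ε : ℝ) (k : ℤ × ℤ) (lam : ℂ) (ω : ℤ → ℂ) : Prop :=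
  ∀ n : ℤ,
    (↑(coefA α (1, 0) (k.1 + (n - 1), k.2)) : ℂ) * ω (n - 1)
      - (↑(ε * (((k.1 : ℝ) + (n : ℝ)) ^ 2 + (α * (k.2 : ℝ)) ^ 2)) : ℂ) * ω n
      - (↑(coefA α (1, 0) (k.1 + (n + 1), k.2)) : ℂ) * ω (n + 1)
    = lam * ω n

/-- `lam` is an eigenvalue of the line-`k̂` problem: there is a nonzero
square-summable solution. -/
def IsLineEig (α ε : ℝ) (k : ℤ × ℤ) (lam : ℂ) : Prop :=
  ∃ ω : ℤ → ℂ, Memℓp ω 2 ∧ ω ≠ 0 ∧ LineEqn α ε k lam ω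

open Filter Set

namespace NSZ
noncomputable def aa (α : ℝ) (m : ℤ) : ℝ := α / 2 * (1 - 1 / ((m : ℝ) ^ 2 + α ^ 2))

/-- diagonal coefficient `λ + ε(n²+α²)`. -/
noncomputable def dd (α lam ε : ℝ) (n : ℤ) : ℝ := lam + ε * ((n : ℝ) ^ 2 + α ^ 2)

/-- `g_n = d_n / a_n`. -/
noncomputable def gg (α lam ε : ℝ) (n : ℤ) : ℝ := dd α lam ε n / aa α n

section Basic

variable {α lam ε : ℝ} (hα1 : 1/2 < α) (hα2 : α < 0.8469)

lemma sq_int_ge {m : ℤ} (hm : m ≠ 0) : (1:ℝ) ≤ (m : ℝ) ^ 2 := by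
  rcases lt_or_gt_of_ne hm with h | h
  · have h' : m ≤ -1 := by omega
    have : (m : ℝ) ≤ -1 := by exact_mod_cast h'
    nlinarith
  · have : (1:ℝ) ≤ (m : ℝ) := by exact_mod_cast h
    nlinarith

include hα1 in
lemma hα0 : 0 < α := by linarith

include hα1 in
lemma denom_pos (m : ℤ) : 0 < (m : ℝ) ^ 2 + α ^ 2 := by nlinarith [sq_nonneg ((m:ℝ))]

lemma aa_even (α : ℝ) (m : ℤ) : aa α (-m) = aa α m := by
  unfold aa; push_cast; ring_nf

include hα1 in
lemma aa_pos {m : ℤ} (hm : m ≠ 0) : 0 < aa α m := by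
  have h1 := sq_int_ge hm
  have h2 : (1:ℝ) < (m:ℝ)^2 + α^2 := by nlinarith
  have h3 : 1 / ((m:ℝ)^2 + α^2) < 1 := by
    rw [div_lt_one (by linarith)]; linarith
  have h4 : 0 < 1 / ((m:ℝ)^2 + α^2) := by positivity
  unfold aa; nlinarith

include hα1 in
lemma aa_lt_half (m : ℤ) : aa α m < α / 2 := by
  have h4 : 0 < 1 / ((m:ℝ)^2 + α^2) := by
    have := denom_pos (α := α) (by linarith) m; positivity
  unfold aa; nlinarith

include hα1 in
lemma aa_mono {m m' : ℤ} (h1 : 1 ≤ m) (h2 : m ≤ m') : aa α m ≤ aa α m' := by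
  have hm : (1:ℝ) ≤ (m:ℝ) := by exact_mod_cast h1
  have hmm : (m:ℝ) ≤ (m':ℝ) := by exact_mod_cast h2
  have hsq : (m:ℝ)^2 + α^2 ≤ (m':ℝ)^2 + α^2 := by nlinarith
  have hp : (0:ℝ) < (m:ℝ)^2 + α^2 := by nlinarith
  have : 1 / ((m':ℝ)^2 + α^2) ≤ 1 / ((m:ℝ)^2 + α^2) :=
    one_div_le_one_div_of_le hp hsq
  unfold aa; nlinarith

include hα1 hα2 in
lemma aa0_eq : aa α 0 = (α^2 - 1) / (2*α) := by
  have h0 : α ≠ 0 := by positivity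
  unfold aa; push_cast; field_simp; ring

include hα1 hα2 in
lemma aa0_lb : 166/1000 ≤ -aa α 0 := by
  rw [aa0_eq hα1 hα2]
  rw [le_neg, div_le_iff₀ (by linarith)]
  nlinarith

include hα1 hα2 in
lemma aa0_ub : -aa α 0 ≤ 3/4 := by
  rw [aa0_eq hα1 hα2, neg_le, ← neg_div, le_div_iff₀ (by linarith)]
  nlinarith

include hα1 hα2 in
lemma aa1_eq : aa α 1 = α^3 / (2*(1+α^2)) := by
  have h0 : (1:ℝ)^2 + α^2 ≠ 0 := by positivity
  unfold aa; push_cast; field_simp; ring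

include hα1 hα2 in
lemma aa1_lb : 364/10000 ≤ aa α 1 := by
  rw [aa1_eq hα1 hα2, le_div_iff₀ (by nlinarith)]
  nlinarith

include hα1 hα2 in
lemma aa1_ub : aa α 1 ≤ 243/1000 := by
  rw [aa1_eq hα1 hα2, div_le_iff₀ (by nlinarith)]
  nlinarith

include hα1 hα2 in
lemma aa2_lb : 19/100 ≤ aa α 2 := by
  have h : ((2:ℤ):ℝ) = 2 := by norm_num
  have hd : (0:ℝ) < 4 + α^2 := by nlinarith
  unfold aa; rw [h]
  have : 1/((2:ℝ)^2 + α^2) ≤ 1/(4+1/4) := by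
    apply one_div_le_one_div_of_le (by norm_num)
    nlinarith
  nlinarith

include hα1 hα2 in
lemma aa2_ub : aa α 2 ≤ 34/100 := by
  have h : ((2:ℤ):ℝ) = 2 := by norm_num
  have hd : (0:ℝ) < 4 + α^2 := by nlinarith
  unfold aa; rw [h]
  have h5 : 1/(472/100 : ℝ) ≤ 1/((2:ℝ)^2 + α^2) := by
    apply one_div_le_one_div_of_le (by positivity)
    nlinarith
  nlinarith

include hα1 hα2 in
lemma aa3_lb : 8918/10000 * (α/2) ≤ aa α 3 := by
  have h : ((3:ℤ):ℝ) = 3 := by norm_num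
  unfold aa; rw [h]
  have hd : (0:ℝ) < 9 + α^2 := by nlinarith
  have h6 : 1/((3:ℝ)^2 + α^2) ≤ 1/(9+1/4) := by
    apply one_div_le_one_div_of_le (by norm_num)
    nlinarith
  nlinarith

include hα1 hα2 in
lemma aa0_neg : aa α 0 < 0 := by
  have := aa0_lb hα1 hα2; linarith

include hα1 hα2 in
lemma aa_ne (m : ℤ) : aa α m ≠ 0 := by
  rcases eq_or_ne m 0 with rfl | hm
  · exact ne_of_lt (aa0_neg hα1 hα2)
  · exact ne_of_gt (aa_pos hα1 hm)

end Basic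

section CF

variable {α lam ε : ℝ} (hα1 : 1/2 < α) (hα2 : α < 0.8469)
  (hl1 : 1/100 ≤ lam) (hl2 : lam ≤ 10) (he1 : 0 ≤ ε) (he2 : ε ≤ 1)

include hα1 hl1 he1 in
lemma dd_pos (n : ℤ) : 0 < dd α lam ε n := by
  have h1 := denom_pos (α := α) hα1 n
  unfold dd; nlinarith

include hα1 hl1 he1 in
lemma dd_ge (n : ℤ) : lam ≤ dd α lam ε n := by
  have h1 := denom_pos (α := α) hα1 n
  unfold dd; nlinarith

include hα1 hα2 hl1 he1 in
lemma gg_lb {n : ℤ} (hn : n ≠ 0) : 23/1000 ≤ gg α lam ε n := by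
  have hpa := aa_pos hα1 hn
  have hub := aa_lt_half hα1 (m := n)
  have hdd := dd_ge hα1 hl1 he1 (lam := lam) (ε := ε) n
  rw [gg, le_div_iff₀ hpa]
  nlinarith

include hα1 hα2 hl1 he1 in
lemma gg_pos {n : ℤ} (hn : n ≠ 0) : 0 < gg α lam ε n := by
  have := gg_lb hα1 hα2 hl1 he1 (lam := lam) (ε := ε) hn; linarith

end CF

/-- truncated continued fraction. -/
noncomputable def Yt (α lam ε : ℝ) : ℕ → ℤ → ℝ
  | 0, _ => 1
  | (k+1), n => 1 / (gg α lam ε n + Yt α lam ε k (n+1))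

/-- the continued fraction value `y_n`. -/
noncomputable def yv (α lam ε : ℝ) (n : ℤ) : ℝ :=
  limUnder Filter.atTop (fun k => Yt α lam ε k n)

section CF2

variable {α lam ε : ℝ} (hα1 : 1/2 < α) (hα2 : α < 0.8469)
  (hl1 : 1/100 ≤ lam) (hl2 : lam ≤ 10) (he1 : 0 ≤ ε) (he2 : ε ≤ 1)

include hα1 hα2 hl1 he1 in
lemma Yt_nonneg : ∀ k, ∀ n : ℤ, 1 ≤ n → 0 ≤ Yt α lam ε k n := by
  intro k
  induction k with
  | zero => intro n _; norm_num [Yt]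
  | succ k ih =>
    intro n hn
    have hg := gg_pos hα1 hα2 hl1 he1 (lam := lam) (ε := ε) (n := n) (by omega)
    have h2 := ih (n+1) (by omega)
    have : 0 < gg α lam ε n + Yt α lam ε k (n+1) := by linarith
    simp only [Yt]
    positivity

include hα1 hα2 hl1 he1 in
lemma Yt_le_inv (k : ℕ) {n : ℤ} (hn : 1 ≤ n) :
    Yt α lam ε (k+1) n ≤ 1 / gg α lam ε n := by
  have hg := gg_pos hα1 hα2 hl1 he1 (lam := lam) (ε := ε) (n := n) (by omega)
  have h2 := Yt_nonneg hα1 hα2 hl1 he1 (lam := lam) (ε := ε) k (n+1) (by omega)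
  simp only [Yt]
  apply one_div_le_one_div_of_le hg
  linarith

/-- two-step contraction for the continued fraction map. -/
lemma contr {a b x x' : ℝ} (ha : 23/1000 ≤ a) (hb : 23/1000 ≤ b)
    (hx : 0 ≤ x) (hx' : 0 ≤ x') :
    |1/(a + 1/(b+x)) - 1/(a + 1/(b+x'))| ≤ 999/1000 * |x - x'| := by
  have hbx : 0 < b + x := by linarith
  have hbx' : 0 < b + x' := by linarith
  have hA : 0 < a * (b+x) + 1 := by nlinarith
  have hA' : 0 < a * (b+x') + 1 := by nlinarith
  have ha0 : (0:ℝ) < a := by linarith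
  have hden : (0:ℝ) < a + 1/(b+x) := by positivity
  have hden' : (0:ℝ) < a + 1/(b+x') := by positivity
  have e1 : 1/(a + 1/(b+x)) = (b+x)/(a*(b+x)+1) := by
    rw [div_eq_div_iff (ne_of_gt hden) (ne_of_gt hA)]
    field_simp
  have e1' : 1/(a + 1/(b+x')) = (b+x')/(a*(b+x')+1) := by
    rw [div_eq_div_iff (ne_of_gt hden') (ne_of_gt hA')]
    field_simp
  rw [e1, e1', div_sub_div _ _ (ne_of_gt hA) (ne_of_gt hA')]
  have enum : (b+x) * (a*(b+x')+1) - (a*(b+x)+1) * (b+x') = x - x' := by ring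
  rw [enum, abs_div, abs_of_pos (mul_pos hA hA'), div_le_iff₀ (mul_pos hA hA')]
  have hu : (529/1000000 : ℝ) ≤ a*(b+x) := by nlinarith
  have hv : (529/1000000 : ℝ) ≤ a*(b+x') := by nlinarith
  have hprod : (1 + 1058/1000000 : ℝ) ≤ (a*(b+x)+1) * (a*(b+x')+1) := by nlinarith
  have hd := abs_nonneg (x - x')
  nlinarith [mul_le_mul_of_nonneg_left hprod hd]

include hα1 hα2 hl1 he1 in
lemma Yt_step : ∀ k, ∀ n : ℤ, 1 ≤ n →
    |Yt α lam ε (k+1) n - Yt α lam ε k n| ≤ 50 * (9995/10000) ^ k := by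
  intro k
  induction k using Nat.strong_induction_on with
  | _ k ih =>
    match k with
    | 0 =>
      intro n hn
      have hg := gg_pos hα1 hα2 hl1 he1 (lam := lam) (ε := ε) (n := n) (by omega)
      have h1 : Yt α lam ε 1 n = 1 / (gg α lam ε n + 1) := by simp [Yt]
      have h2 : (0:ℝ) < 1 / (gg α lam ε n + 1) := by positivity
      have h3 : 1 / (gg α lam ε n + 1) ≤ 1 := by
        rw [div_le_one (by linarith)]; linarith
      have h0 : Yt α lam ε 0 n = 1 := rfl
      rw [h1, h0, pow_zero, mul_one, abs_le]
      constructor <;> linarith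
    | 1 =>
      intro n hn
      have hg := gg_lb hα1 hα2 hl1 he1 (lam := lam) (ε := ε) (n := n) (by omega)
      have h1 := Yt_le_inv hα1 hα2 hl1 he1 (lam := lam) (ε := ε) 0 hn
      have h2 := Yt_le_inv hα1 hα2 hl1 he1 (lam := lam) (ε := ε) 1 hn
      have h3 := Yt_nonneg hα1 hα2 hl1 he1 (lam := lam) (ε := ε) 1 n hn
      have h4 := Yt_nonneg hα1 hα2 hl1 he1 (lam := lam) (ε := ε) 2 n hn
      have h5 : 1 / gg α lam ε n ≤ 1000/23 := by
        have := one_div_le_one_div_of_le (show (0:ℝ) < 23/1000 by norm_num) hg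
        norm_num at this ⊢; linarith
      rw [abs_le]; constructor <;> nlinarith
    | (k+2) =>
      intro n hn
      have hx := Yt_nonneg hα1 hα2 hl1 he1 (lam := lam) (ε := ε) (k+1) (n+2) (by omega)
      have hx' := Yt_nonneg hα1 hα2 hl1 he1 (lam := lam) (ε := ε) k (n+2) (by omega)
      have hga := gg_lb hα1 hα2 hl1 he1 (lam := lam) (ε := ε) (n := n) (by omega)
      have hgb := gg_lb hα1 hα2 hl1 he1 (lam := lam) (ε := ε) (n := n+1) (by omega)
      have e2 : n + (1:ℤ) + 1 = n + 2 := by ring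
      have h1 : Yt α lam ε (k+3) n
          = 1/(gg α lam ε n + 1/(gg α lam ε (n+1) + Yt α lam ε (k+1) (n+2))) := by
        simp [Yt, e2]
      have h2 : Yt α lam ε (k+2) n
          = 1/(gg α lam ε n + 1/(gg α lam ε (n+1) + Yt α lam ε k (n+2))) := by
        simp [Yt, e2]
      have hc := contr hga hgb hx hx'
      have hih := ih k (by omega) (n+2) (by omega)
      calc |Yt α lam ε (k+2+1) n - Yt α lam ε (k+2) n|
      _ ≤ 999/1000 * |Yt α lam ε (k+1) (n+2) - Yt α lam ε k (n+2)| := by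
          rw [show k+2+1 = k+3 by omega, h1, h2]; exact hc
      _ ≤ 999/1000 * (50 * (9995/10000) ^ k) := by nlinarith [abs_nonneg (Yt α lam ε (k+1) (n+2) - Yt α lam ε k (n+2))]
      _ ≤ 50 * (9995/10000) ^ (k+2) := by
          have hp : (0:ℝ) ≤ (9995/10000) ^ k := by positivity
          rw [pow_succ, pow_succ]
          nlinarith

include hα1 hα2 hl1 he1 in
lemma Yt_cauchy {n : ℤ} (hn : 1 ≤ n) : CauchySeq (fun k => Yt α lam ε k n) := by
  apply cauchySeq_of_le_geometric (9995/10000 : ℝ) 50 (by norm_num)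
  intro k
  rw [Real.dist_eq, abs_sub_comm]
  exact Yt_step hα1 hα2 hl1 he1 k n hn

include hα1 hα2 hl1 he1 in
lemma Yt_tendsto {n : ℤ} (hn : 1 ≤ n) :
    Filter.Tendsto (fun k => Yt α lam ε k n) Filter.atTop (nhds (yv α lam ε n)) :=
  (Yt_cauchy hα1 hα2 hl1 he1 hn).tendsto_limUnder

include hα1 hα2 hl1 he1 in
lemma Yt_dist_yv {n : ℤ} (hn : 1 ≤ n) (k : ℕ) :
    dist (Yt α lam ε k n) (yv α lam ε n) ≤ 100000 * (9995/10000) ^ k := by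
  have h := dist_le_of_le_geometric_of_tendsto (9995/10000 : ℝ) 50 (by norm_num)
    (fun m => by rw [Real.dist_eq, abs_sub_comm]; exact Yt_step hα1 hα2 hl1 he1 m n hn)
    (Yt_tendsto hα1 hα2 hl1 he1 hn) k
  calc dist (Yt α lam ε k n) (yv α lam ε n) ≤ 50 * (9995/10000)^k / (1 - 9995/10000) := h
  _ = 100000 * (9995/10000) ^ k := by ring

include hα1 hα2 hl1 he1 in
lemma yv_nonneg {n : ℤ} (hn : 1 ≤ n) : 0 ≤ yv α lam ε n :=
  ge_of_tendsto (Yt_tendsto hα1 hα2 hl1 he1 hn)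
    (Filter.Eventually.of_forall fun k => Yt_nonneg hα1 hα2 hl1 he1 k n hn)

include hα1 hα2 hl1 he1 in
lemma yv_rec {n : ℤ} (hn : 1 ≤ n) :
    yv α lam ε n = 1 / (gg α lam ε n + yv α lam ε (n+1)) := by
  have hg := gg_pos hα1 hα2 hl1 he1 (lam := lam) (ε := ε) (n := n) (by omega)
  have hy1 := yv_nonneg hα1 hα2 hl1 he1 (lam := lam) (ε := ε) (n := n+1) (by omega)
  have hden : (0:ℝ) < gg α lam ε n + yv α lam ε (n+1) := by linarith
  have ht1 : Filter.Tendsto (fun k => Yt α lam ε (k+1) n) Filter.atTop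
      (nhds (yv α lam ε n)) :=
    (Yt_tendsto hα1 hα2 hl1 he1 hn).comp (Filter.tendsto_add_atTop_nat 1)
  have ht2 : Filter.Tendsto (fun k => Yt α lam ε (k+1) n) Filter.atTop
      (nhds (1 / (gg α lam ε n + yv α lam ε (n+1)))) := by
    have : (fun k => Yt α lam ε (k+1) n)
        = fun k => 1 / (gg α lam ε n + Yt α lam ε k (n+1)) := by
      funext k; simp [Yt]
    rw [this]
    exact (tendsto_const_nhds.div
      (tendsto_const_nhds.add (Yt_tendsto hα1 hα2 hl1 he1 (by omega : 1 ≤ n+1)))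
      (ne_of_gt hden))
  exact tendsto_nhds_unique ht1 ht2

include hα1 hα2 hl1 he1 in
lemma yv_le_inv {n : ℤ} (hn : 1 ≤ n) : yv α lam ε n ≤ 1 / gg α lam ε n := by
  rw [yv_rec hα1 hα2 hl1 he1 hn]
  have hg := gg_pos hα1 hα2 hl1 he1 (lam := lam) (ε := ε) (n := n) (by omega)
  have hy1 := yv_nonneg hα1 hα2 hl1 he1 (lam := lam) (ε := ε) (n := n+1) (by omega)
  apply one_div_le_one_div_of_le hg
  linarith

include hα1 hα2 hl1 he1 in
lemma yv_pos {n : ℤ} (hn : 1 ≤ n) : 0 < yv α lam ε n := by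
  rw [yv_rec hα1 hα2 hl1 he1 hn]
  have hg := gg_pos hα1 hα2 hl1 he1 (lam := lam) (ε := ε) (n := n) (by omega)
  have hy1 := yv_nonneg hα1 hα2 hl1 he1 (lam := lam) (ε := ε) (n := n+1) (by omega)
  positivity

include hα1 hα2 hl1 he1 in
lemma yv_mul_eq {n : ℤ} (hn : 1 ≤ n) :
    yv α lam ε n * yv α lam ε (n+1) = 1 - gg α lam ε n * yv α lam ε n := by
  have hg := gg_pos hα1 hα2 hl1 he1 (lam := lam) (ε := ε) (n := n) (by omega)
  have hy1 := yv_nonneg hα1 hα2 hl1 he1 (lam := lam) (ε := ε) (n := n+1) (by omega)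
  have hden : (0:ℝ) < gg α lam ε n + yv α lam ε (n+1) := by linarith
  have h := yv_rec hα1 hα2 hl1 he1 (lam := lam) (ε := ε) hn
  field_simp at h
  nlinarith [h]

include hα1 hα2 hl1 he1 in
lemma yv_pair {n : ℤ} (hn : 1 ≤ n) :
    yv α lam ε n * yv α lam ε (n+1) ≤ 1 - 1/2000 := by
  rw [yv_mul_eq hα1 hα2 hl1 he1 hn]
  have hg := gg_lb hα1 hα2 hl1 he1 (lam := lam) (ε := ε) (n := n) (by omega)
  have hg' := gg_lb hα1 hα2 hl1 he1 (lam := lam) (ε := ε) (n := n+1) (by omega)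
  have hy' := yv_le_inv hα1 hα2 hl1 he1 (lam := lam) (ε := ε) (n := n+1) (by omega)
  have h5 : 1 / gg α lam ε (n+1) ≤ 1000/23 := by
    have := one_div_le_one_div_of_le (show (0:ℝ) < 23/1000 by norm_num) hg'
    norm_num at this ⊢; linarith
  -- g·y ≥ 1/2000  where  y = 1/(g + y')
  rw [yv_rec hα1 hα2 hl1 he1 hn]
  have hden : (0:ℝ) < gg α lam ε n + yv α lam ε (n+1) := by
    have := yv_nonneg hα1 hα2 hl1 he1 (lam := lam) (ε := ε) (n := n+1) (by omega)
    linarith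
  have key : 1/2000 ≤ gg α lam ε n * (1 / (gg α lam ε n + yv α lam ε (n+1))) := by
    rw [mul_one_div, le_div_iff₀ hden]
    nlinarith
  linarith

end CF2
/-- upward part of the decaying solution: `up j = u_{2+j}`. -/
noncomputable def up (α lam ε : ℝ) : ℕ → ℝ
  | 0 => 1
  | (j+1) => yv α lam ε (3+j) * (aa α (2+j) / aa α (3+j)) * up α lam ε j

/-- downward part: `dnn k = u_{2-k}`. -/
noncomputable def dnn (α lam ε : ℝ) : ℕ → ℝ
  | 0 => 1
  | 1 => (dd α lam ε 2 + aa α 2 * yv α lam ε 3) / aa α 1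
  | (k+2) => (dd α lam ε (1-(k:ℤ)) * dnn α lam ε (k+1) + aa α (2-(k:ℤ)) * dnn α lam ε k)
      / aa α (-(k:ℤ))

/-- the full solution on `ℤ`. -/
noncomputable def uF (α lam ε : ℝ) (n : ℤ) : ℝ :=
  if 2 ≤ n then up α lam ε (n-2).toNat else dnn α lam ε (2-n).toNat

/-- the recurrence (solution property). -/
def SolP (α lam ε : ℝ) (u : ℤ → ℝ) : Prop :=
  ∀ n : ℤ, aa α (n-1) * u (n-1) - dd α lam ε n * u n - aa α (n+1) * u (n+1) = 0

lemma uF_up (α lam ε : ℝ) (j : ℕ) : uF α lam ε (2+(j:ℤ)) = up α lam ε j := by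
  rw [uF, if_pos (by omega)]
  congr 1
  omega

lemma uF_dn (α lam ε : ℝ) (k : ℕ) : uF α lam ε (2-(k:ℤ)) = dnn α lam ε k := by
  rcases Nat.eq_zero_or_pos k with rfl | hk
  · rw [uF, if_pos (by omega)]
    norm_num [up, dnn]
  · rw [uF, if_neg (by omega)]
    congr 1
    omega

section U

variable {α lam ε : ℝ} (hα1 : 1/2 < α) (hα2 : α < 0.8469)
  (hl1 : 1/100 ≤ lam) (hl2 : lam ≤ 10) (he1 : 0 ≤ ε) (he2 : ε ≤ 1)

include hα1 hα2 hl1 he1 in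
lemma up_pos : ∀ j, 0 < up α lam ε j := by
  intro j
  induction j with
  | zero => norm_num [up]
  | succ j ih =>
    have hy := yv_pos hα1 hα2 hl1 he1 (lam := lam) (ε := ε) (n := 3+(j:ℤ)) (by omega)
    have h2 := aa_pos hα1 (m := 2+(j:ℤ)) (by omega)
    have h3 := aa_pos hα1 (m := 3+(j:ℤ)) (by omega)
    rw [up]
    positivity

include hα1 hα2 hl1 he1 in
lemma sol_up (j : ℕ) :
    aa α (2+j) * up α lam ε j - dd α lam ε (3+j) * up α lam ε (j+1)
      - aa α (4+j) * up α lam ε (j+2) = 0 := by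
  have h2 := aa_pos hα1 (m := 2+(j:ℤ)) (by omega)
  have h3 := aa_pos hα1 (m := 3+(j:ℤ)) (by omega)
  have h4 := aa_pos hα1 (m := 4+(j:ℤ)) (by omega)
  have hrec := yv_rec hα1 hα2 hl1 he1 (lam := lam) (ε := ε) (n := 3+(j:ℤ)) (by omega)
  have hden : (0:ℝ) < gg α lam ε (3+j) + yv α lam ε (3+j+1) := by
    have := gg_pos hα1 hα2 hl1 he1 (lam := lam) (ε := ε) (n := 3+(j:ℤ)) (by omega)
    have := yv_nonneg hα1 hα2 hl1 he1 (lam := lam) (ε := ε) (n := 3+(j:ℤ)+1) (by omega)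
    linarith
  have key : yv α lam ε (3+j) * (gg α lam ε (3+j) + yv α lam ε (3+j+1)) = 1 := by
    rw [hrec]; field_simp
  have e34 : (3:ℤ)+j+1 = 4+j := by ring
  rw [e34] at key hden
  have hgg : gg α lam ε (3+j) = dd α lam ε (3+j) / aa α (3+j) := rfl
  rw [hgg] at key
  have eup1 : up α lam ε (j+1) = yv α lam ε (3+j) * (aa α (2+j) / aa α (3+j)) * up α lam ε j := by
    rw [up]
  have eup2 : up α lam ε (j+2) = yv α lam ε (4+j) * (aa α (3+j) / aa α (4+j)) * up α lam ε (j+1) := by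
    show up α lam ε (j+1+1) = _
    rw [up]
    have e1 : (3:ℤ)+(j+1:ℕ) = 4+j := by push_cast; ring
    have e2 : (2:ℤ)+(j+1:ℕ) = 3+j := by push_cast; ring
    rw [e1, e2]
  rw [eup2, eup1]
  field_simp at key ⊢
  linear_combination (- aa α (2+(j:ℤ)) * up α lam ε j) * key

include hα1 hα2 hl1 he1 in
lemma sol_uF : SolP α lam ε (uF α lam ε) := by
  intro n
  rcases le_or_gt 3 n with hn3 | hn3
  · -- n = 3 + j
    obtain ⟨j, rfl⟩ : ∃ j : ℕ, n = 3 + (j:ℤ) := ⟨(n-3).toNat, by omega⟩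
    have e1 : (3:ℤ)+j-1 = 2+j := by ring
    have e2 : (3:ℤ)+j+1 = 2+(j+2:ℕ) := by push_cast; ring
    have e3 : (3:ℤ)+j = 2+(j+1:ℕ) := by push_cast; ring
    rw [e1, uF_up α lam ε j]
    rw [e2, uF_up α lam ε (j+2)]
    nth_rewrite 2 [e3]
    rw [uF_up α lam ε (j+1)]
    have := sol_up hα1 hα2 hl1 he1 (lam := lam) (ε := ε) j
    have e4 : (4:ℤ)+j = 2+(j+2:ℕ) := by push_cast; ring
    rw [e4] at this
    linarith [this]
  · rcases eq_or_lt_of_le (by omega : n ≤ 2) with hn2 | hn2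
    · -- n = 2
      subst hn2
      have hu2 : uF α lam ε 2 = 1 := by
        rw [uF, if_pos (by norm_num)]
        norm_num [up]
      have hu1 : uF α lam ε 1 = dnn α lam ε 1 := by
        have := uF_dn α lam ε 1; norm_num at this; exact this
      have hu3 : uF α lam ε 3 = up α lam ε 1 := by
        have := uF_up α lam ε 1; norm_num at this; exact this
      norm_num
      rw [hu1, hu2, hu3]
      have h1 := aa_ne hα1 hα2 (m := 1)
      have h3 := aa_ne hα1 hα2 (m := 3)
      rw [dnn, up]
      have e5 : (3:ℤ)+(0:ℕ) = 3 := by norm_num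
      have e6 : (2:ℤ)+(0:ℕ) = 2 := by norm_num
      rw [e5, e6]
      norm_num [up]
      field_simp
      ring
    · -- n ≤ 1, n = 1 - k
      obtain ⟨k, rfl⟩ : ∃ k : ℕ, n = 1 - (k:ℤ) := ⟨(1-n).toNat, by omega⟩
      have e1 : (1:ℤ)-k-1 = 2-(k+2:ℕ) := by push_cast; ring
      have e2 : (1:ℤ)-k = 2-(k+1:ℕ) := by push_cast; ring
      have e3 : (1:ℤ)-k+1 = 2-(k:ℤ) := by ring
      rw [e1, uF_dn α lam ε (k+2), e3, uF_dn α lam ε k]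
      nth_rewrite 2 [e2]
      rw [uF_dn α lam ε (k+1)]
      have hne := aa_ne hα1 hα2 (m := -(k:ℤ))
      have edn : dnn α lam ε (k+2)
          = (dd α lam ε (1-(k:ℤ)) * dnn α lam ε (k+1) + aa α (2-(k:ℤ)) * dnn α lam ε k)
            / aa α (-(k:ℤ)) := by
        rw [dnn]
      have ea : (2:ℤ)-(k+2:ℕ) = -(k:ℤ) := by push_cast; ring
      rw [ea, edn]
      field_simp
      ring

end U
lemma coefA_eq (α : ℝ) (m : ℤ) : coefA α (1,0) (m, -1) = aa α m := by
  unfold coefA aa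
  push_cast
  norm_num
  ring

lemma dd_even (α lam ε : ℝ) (n : ℤ) : dd α lam ε (-n) = dd α lam ε n := by
  unfold dd; push_cast; ring_nf

section Mirror

variable {α lam ε : ℝ} (hα1 : 1/2 < α) (hα2 : α < 0.8469)
  (hl1 : 1/100 ≤ lam) (hl2 : lam ≤ 10) (he1 : 0 ≤ ε) (he2 : ε ≤ 1)

lemma sol_mirror {u : ℤ → ℝ} (hu : SolP α lam ε u) :
    SolP α lam ε (fun n => (-1:ℝ)^n * u (-n)) := by
  intro n
  have hne : (-1:ℝ) ≠ 0 := by norm_num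
  have hm := hu (-n)
  have ea : -n - 1 = -(n+1) := by ring
  have eb : -n + 1 = -(n-1) := by ring
  rw [ea, eb] at hm
  rw [aa_even α (n+1), aa_even α (n-1), dd_even] at hm
  show aa α (n-1) * ((-1:ℝ)^(n-1) * u (-(n-1))) - dd α lam ε n * ((-1:ℝ)^n * u (-n))
      - aa α (n+1) * ((-1:ℝ)^(n+1) * u (-(n+1))) = 0
  have hz1 : (-1:ℝ)^(n-1) = -(-1:ℝ)^n := by
    rw [zpow_sub_one₀ hne]; ring
  have hz2 : (-1:ℝ)^(n+1) = -(-1:ℝ)^n := by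
    rw [zpow_add_one₀ hne]; ring
  rw [hz1, hz2]
  linear_combination ((-1:ℝ)^n) * hm

lemma sol_sub {u v : ℤ → ℝ} (hu : SolP α lam ε u) (hv : SolP α lam ε v) :
    SolP α lam ε (fun n => u n - v n) := by
  intro n
  have h1 := hu n
  have h2 := hv n
  simp only []
  ring_nf
  ring_nf at h1 h2
  linarith

include hα1 hα2 in
lemma sol_zero {w : ℤ → ℝ} (hw : SolP α lam ε w) (h0 : w 0 = 0) (h1 : w 1 = 0) :
    ∀ n, w n = 0 := by
  have key : ∀ n : ℤ, w n = 0 ∧ w (n+1) = 0 := by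
    intro n
    induction n using Int.induction_on with
    | zero => exact ⟨h0, h1⟩
    | succ k ih =>
      refine ⟨ih.2, ?_⟩
      have hs := hw (k+1)
      have e1 : (k:ℤ)+1-1 = k := by ring
      rw [e1, ih.1, ih.2] at hs
      have := aa_ne hα1 hα2 (m := (k:ℤ)+1+1)
      have : aa α ((k:ℤ)+1+1) * w ((k:ℤ)+1+1) = 0 := by linarith
      exact (mul_eq_zero.mp this).resolve_left (aa_ne hα1 hα2 _)
    | pred k ih =>
      have hs := hw (-(k:ℤ))
      have e1 : -(k:ℤ)+1 = -k+1 := by ring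
      rw [ih.1] at hs
      have e2 : w (-(k:ℤ)+1) = 0 := by
        have := ih.2
        simpa using this
      rw [e2] at hs
      have h3 : aa α (-(k:ℤ)-1) * w (-(k:ℤ)-1) = 0 := by linarith
      have h4 : w (-(k:ℤ)-1) = 0 := (mul_eq_zero.mp h3).resolve_left (aa_ne hα1 hα2 _)
      constructor
      · exact h4
      · have e5 : -(k:ℤ)-1+1 = -k := by ring
        rw [e5]; exact ih.1
  exact fun n => (key n).1

include hα1 hα2 in
lemma sol_unique {u v : ℤ → ℝ} (hu : SolP α lam ε u) (hv : SolP α lam ε v)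
    (h0 : u 0 = v 0) (h1 : u 1 = v 1) : ∀ n, u n = v n := by
  have := sol_zero hα1 hα2 (sol_sub hu hv)
    (by simp [h0]) (by simp [h1])
  intro n
  have hn := this n
  linarith

end Mirror

section Decay

variable {α lam ε : ℝ} (hα1 : 1/2 < α) (hα2 : α < 0.8469)
  (hl1 : 1/100 ≤ lam) (hl2 : lam ≤ 10) (he1 : 0 ≤ ε) (he2 : ε ≤ 1)

include hα1 hα2 hl1 he1 in
lemma up_two_step (j : ℕ) :
    up α lam ε (j+2) ≤ (9995/10000) * up α lam ε j := by
  have h2 := aa_pos hα1 (m := 2+(j:ℤ)) (by omega)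
  have h3 := aa_pos hα1 (m := 3+(j:ℤ)) (by omega)
  have h4 := aa_pos hα1 (m := 4+(j:ℤ)) (by omega)
  have hup := up_pos hα1 hα2 hl1 he1 (lam := lam) (ε := ε) j
  have hy3 := yv_pos hα1 hα2 hl1 he1 (lam := lam) (ε := ε) (n := 3+(j:ℤ)) (by omega)
  have hy4 := yv_pos hα1 hα2 hl1 he1 (lam := lam) (ε := ε) (n := 4+(j:ℤ)) (by omega)
  have hpair := yv_pair hα1 hα2 hl1 he1 (lam := lam) (ε := ε) (n := 3+(j:ℤ)) (by omega)
  have e34 : (3:ℤ)+j+1 = 4+j := by ring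
  rw [e34] at hpair
  have hmono := aa_mono hα1 (m := 2+(j:ℤ)) (m' := 4+(j:ℤ)) (by omega) (by omega)
  have eup1 : up α lam ε (j+1) = yv α lam ε (3+j) * (aa α (2+j) / aa α (3+j)) * up α lam ε j := by
    rw [up]
  have eup2 : up α lam ε (j+2) = yv α lam ε (4+j) * (aa α (3+j) / aa α (4+j)) * up α lam ε (j+1) := by
    show up α lam ε (j+1+1) = _
    rw [up]
    have e1 : (3:ℤ)+(j+1:ℕ) = 4+j := by push_cast; ring
    have e2 : (2:ℤ)+(j+1:ℕ) = 3+j := by push_cast; ring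
    rw [e1, e2]
  have eprod : up α lam ε (j+2)
      = (yv α lam ε (3+j) * yv α lam ε (4+j)) * (aa α (2+j) / aa α (4+j)) * up α lam ε j := by
    rw [eup2, eup1]
    field_simp
  rw [eprod]
  have hratio : aa α (2+(j:ℤ)) / aa α (4+(j:ℤ)) ≤ 1 := by
    rw [div_le_one h4]; exact hmono
  have hrpos : 0 < aa α (2+(j:ℤ)) / aa α (4+(j:ℤ)) := by positivity
  have hq1 : yv α lam ε (3+(j:ℤ)) * yv α lam ε (4+(j:ℤ)) * (aa α (2+(j:ℤ)) / aa α (4+(j:ℤ)))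
      ≤ 1 - 1/2000 := by
    nlinarith [mul_pos hy3 hy4]
  nlinarith [mul_le_mul_of_nonneg_right hq1 (le_of_lt hup)]

include hα1 hα2 hl1 he1 in
lemma up_exp_bound :
    ∀ j, up α lam ε j
      ≤ (max 1 (up α lam ε 1 * (100000/99975))) * (99975/100000) ^ j := by
  set M := max 1 (up α lam ε 1 * (100000/99975)) with hM
  have hQ : (0:ℝ) < 99975/100000 := by norm_num
  intro j
  induction j using Nat.strong_induction_on with
  | _ j ih =>
    match j with
    | 0 =>
      have : up α lam ε 0 = 1 := rfl
      rw [this, pow_zero, mul_one]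
      exact le_max_left _ _
    | 1 =>
      have h := le_max_right 1 (up α lam ε 1 * (100000/99975))
      calc up α lam ε 1 = (up α lam ε 1 * (100000/99975)) * (99975/100000)^1 := by
            norm_num; ring
      _ ≤ M * (99975/100000)^1 := by
            apply mul_le_mul_of_nonneg_right h (by norm_num)
    | (j+2) =>
      have h1 := up_two_step hα1 hα2 hl1 he1 (lam := lam) (ε := ε) j
      have h2 := ih j (by omega)
      have hMpos : (0:ℝ) < M := lt_of_lt_of_le one_pos (le_max_left _ _)
      have hp : (0:ℝ) ≤ (99975/100000) ^ j := by positivity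
      calc up α lam ε (j+2) ≤ (9995/10000) * up α lam ε j := h1
      _ ≤ (9995/10000) * (M * (99975/100000)^j) := by nlinarith
      _ ≤ M * (99975/100000)^(j+2) := by
          rw [pow_succ, pow_succ]
          nlinarith

end Decay
section Eig

variable {α lam ε : ℝ} (hα1 : 1/2 < α) (hα2 : α < 0.8469)
  (hl1 : 1/100 ≤ lam) (hl2 : lam ≤ 10) (he1 : 0 ≤ ε) (he2 : ε ≤ 1)

lemma uF_one (α lam ε : ℝ) : uF α lam ε 1 = dnn α lam ε 1 := by
  have := uF_dn α lam ε 1; norm_num at this; exact this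

lemma uF_zero (α lam ε : ℝ) : uF α lam ε 0 = dnn α lam ε 2 := by
  have := uF_dn α lam ε 2; norm_num at this; exact this

lemma uF_negone (α lam ε : ℝ) : uF α lam ε (-1) = dnn α lam ε 3 := by
  have := uF_dn α lam ε 3; norm_num at this; exact this

lemma uF_two (α lam ε : ℝ) : uF α lam ε 2 = 1 := by
  rw [uF, if_pos (by norm_num)]; norm_num [up]

include hα1 hα2 hl1 he1 in
lemma uF_symm (hG : dnn α lam ε 3 + dnn α lam ε 1 = 0) :
    ∀ n : ℤ, uF α lam ε n = (-1:ℝ)^n * uF α lam ε (-n) := by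
  have hsol := sol_uF hα1 hα2 hl1 he1 (lam := lam) (ε := ε)
  have hsolv := sol_mirror (hu := hsol)
  apply sol_unique hα1 hα2 hsol hsolv
  · simp
  · have h1 := uF_one α lam ε
    have h3 := uF_negone α lam ε
    simp only [zpow_one]
    rw [h1, h3]
    linarith

include hα1 hα2 hl1 he1 in
lemma uF_abs_even (hG : dnn α lam ε 3 + dnn α lam ε 1 = 0) (n : ℤ) :
    |uF α lam ε (-n)| = |uF α lam ε n| := by
  have h := uF_symm hα1 hα2 hl1 he1 hG n
  rw [h, abs_mul]
  rcases Int.even_or_odd n with he | ho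
  · rw [he.neg_one_zpow]; norm_num
  · rw [ho.neg_one_zpow]; norm_num

include hα1 hα2 hl1 he1 in
lemma uF_glob_bound (hG : dnn α lam ε 3 + dnn α lam ε 1 = 0) :
    ∃ C : ℝ, 0 < C ∧ ∀ n : ℤ,
      |uF α lam ε n| ≤ C * (99975/100000) ^ n.natAbs := by
  obtain ⟨M, hM1, hMub, hMbd⟩ :
      ∃ M : ℝ, 1 ≤ M ∧ up α lam ε 1 * (100000/99975) ≤ M ∧
        ∀ j, up α lam ε j ≤ M * (99975/100000) ^ j :=
    ⟨max 1 (up α lam ε 1 * (100000/99975)), le_max_left _ _, le_max_right _ _,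
      up_exp_bound hα1 hα2 hl1 he1⟩
  refine ⟨M * (100000/99975)^2 + |dnn α lam ε 1| * (100000/99975) + |dnn α lam ε 2|,
    by positivity, ?_⟩
  have hNat : ∀ j : ℕ, |uF α lam ε (j:ℤ)|
      ≤ (M * (100000/99975)^2 + |dnn α lam ε 1| * (100000/99975) + |dnn α lam ε 2|)
        * (99975/100000) ^ j := by
    intro j
    match j with
    | 0 =>
      rw [show ((0:ℕ):ℤ) = 0 by norm_num, uF_zero, pow_zero, mul_one]
      nlinarith [abs_nonneg (dnn α lam ε 1), abs_nonneg (dnn α lam ε 2)]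
    | 1 =>
      rw [show ((1:ℕ):ℤ) = 1 by norm_num, uF_one, pow_one]
      nlinarith [abs_nonneg (dnn α lam ε 1), abs_nonneg (dnn α lam ε 2)]
    | (j+2) =>
      have e1 : ((j+2:ℕ):ℤ) = 2 + (j:ℤ) := by push_cast; ring
      rw [e1, uF_up]
      have h1 := hMbd j
      have hpos := up_pos hα1 hα2 hl1 he1 (lam := lam) (ε := ε) j
      rw [abs_of_pos hpos]
      have hQp : (0:ℝ) < (99975/100000 : ℝ)^j := by positivity
      have hqq : M * (100000/99975)^2 * ((99975/100000:ℝ))^(j+2) = M * (99975/100000)^j := by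
        ring
      nlinarith [abs_nonneg (dnn α lam ε 1), abs_nonneg (dnn α lam ε 2)]
  intro n
  rcases le_or_gt 0 n with hn | hn
  · have e : n = ((n.toNat : ℕ) : ℤ) := by omega
    have e2 : n.natAbs = n.toNat := by omega
    rw [e2]
    calc |uF α lam ε n| = |uF α lam ε ((n.toNat : ℕ):ℤ)| := by rw [← e]
    _ ≤ _ := hNat n.toNat
  · have e : n = -(((-n).toNat : ℕ) : ℤ) := by omega
    have e2 : n.natAbs = (-n).toNat := by omega
    rw [e2]
    have habs := uF_abs_even hα1 hα2 hl1 he1 hG (((-n).toNat : ℕ) : ℤ)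
    calc |uF α lam ε n| = |uF α lam ε (-(((-n).toNat:ℕ):ℤ))| := by rw [← e]
    _ = |uF α lam ε (((-n).toNat:ℕ):ℤ)| := habs
    _ ≤ _ := hNat (-n).toNat

include hα1 hα2 hl1 he1 in
theorem eig_of_G (hG : dnn α lam ε 3 + dnn α lam ε 1 = 0) :
    IsLineEig α ε (0, -1) ((lam : ℝ) : ℂ) := by
  obtain ⟨C, hCpos, hbd⟩ := uF_glob_bound hα1 hα2 hl1 he1 hG
  refine ⟨fun n => ((uF α lam ε n : ℝ) : ℂ), ?_, ?_, ?_⟩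
  · -- Memℓp
    apply memℓp_gen
    have htR : ((2:ENNReal)).toReal = (2:ℝ) := by norm_num
    rw [htR]
    have hsum2 : Summable (fun n : ℤ => |uF α lam ε n| ^ (2:ℕ)) := by
      have hgeo : Summable (fun n : ℤ => C^2 * ((99975/100000:ℝ)^2) ^ n.natAbs) := by
        have hgn : Summable (fun k : ℕ => C^2 * ((99975/100000:ℝ)^2) ^ k) :=
          (summable_geometric_of_lt_one (r := (99975/100000:ℝ)^2)
            (by norm_num) (by norm_num)).mul_left (C^2)
        apply Summable.of_nat_of_neg
        · exact hgn.congr (fun k => by rw [Int.natAbs_natCast])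
        · exact hgn.congr (fun k => by rw [Int.natAbs_neg, Int.natAbs_natCast])
      apply Summable.of_nonneg_of_le (fun n => by positivity) _ hgeo
      intro n
      calc |uF α lam ε n| ^ (2:ℕ) ≤ (C * (99975/100000) ^ n.natAbs)^(2:ℕ) :=
            pow_le_pow_left₀ (abs_nonneg _) (hbd n) 2
      _ = C^2 * ((99975/100000:ℝ)^2) ^ n.natAbs := by
            rw [mul_pow, ← pow_mul, ← pow_mul, Nat.mul_comm]
    refine hsum2.congr (fun n => ?_)
    rw [Complex.norm_real, Real.norm_eq_abs,
      show (2:ℝ) = ((2:ℕ):ℝ) by norm_num, Real.rpow_natCast]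
  · -- nonzero
    intro h
    have h2 := congrFun h 2
    rw [uF_two] at h2
    norm_num at h2
  · -- LineEqn
    intro n
    have hs := sol_uF hα1 hα2 hl1 he1 (lam := lam) (ε := ε) n
    have hreal : aa α (n-1) * uF α lam ε (n-1) - ε * ((n:ℝ)^2 + α^2) * uF α lam ε n
        - aa α (n+1) * uF α lam ε (n+1) = lam * uF α lam ε n := by
      unfold dd at hs; ring_nf; ring_nf at hs; linarith
    have hC := congrArg (fun x : ℝ => (x : ℂ)) hreal
    push_cast at hC
    beta_reduce
    have ef : ((0:ℤ),(-1:ℤ)).1 = 0 := rfl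
    have es : ((0:ℤ),(-1:ℤ)).2 = -1 := rfl
    rw [ef, es, zero_add, zero_add, coefA_eq, coefA_eq]
    push_cast
    linear_combination hC

end Eig
section Signs

variable {α : ℝ} (hα1 : 1/2 < α) (hα2 : α < 0.8469)

lemma dd_e0 (α lam : ℝ) (n : ℤ) : dd α lam 0 n = lam := by simp [dd]

lemma gg_e0 (α lam : ℝ) (n : ℤ) : gg α lam 0 n = lam / aa α n := by
  rw [gg, dd_e0]

include hα1 hα2 in
lemma aa3_lb' : 4459/10000 * α ≤ aa α 3 := by
  have := aa3_lb hα1 hα2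
  linarith

include hα1 hα2 in
lemma aa3_bounds : 22/100 ≤ aa α 3 ∧ aa α 3 ≤ 43/100 := by
  have h1 := aa3_lb' hα1 hα2
  have h2 := aa_lt_half hα1 (m := 3)
  constructor <;> nlinarith

include hα1 hα2 in
lemma Yt_inv01 : ∀ k, ∀ n : ℤ, 3 ≤ n →
    9/10 ≤ Yt α (1/100) 0 k n ∧ Yt α (1/100) 0 k n ≤ 10/9 - 1/(100 * aa α 3) := by
  have hx3 := aa3_bounds hα1 hα2
  have hxl := aa3_lb' hα1 hα2
  have hα0 : (0:ℝ) < α := by linarith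
  intro k
  induction k with
  | zero =>
    intro n hn
    have : Yt α (1/100) 0 0 n = 1 := rfl
    rw [this]
    constructor
    · norm_num
    · have : 1/(100 * aa α 3) ≤ 1/22 := by
        apply one_div_le_one_div_of_le (by norm_num)
        nlinarith
      linarith
  | succ k ih =>
    intro n hn
    have haan : aa α 3 ≤ aa α n := aa_mono hα1 (by norm_num) hn
    have haanu : aa α n ≤ α/2 := le_of_lt (aa_lt_half hα1 n)
    have haan0 : 0 < aa α n := by nlinarith
    have hgl : 1/(50*α) ≤ gg α (1/100) 0 n := by
      rw [gg_e0]
      rw [div_le_div_iff₀ (by positivity) haan0]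
      nlinarith
    have hgu : gg α (1/100) 0 n ≤ 1/(100 * aa α 3) := by
      rw [gg_e0]
      rw [div_le_div_iff₀ haan0 (by nlinarith)]
      nlinarith
    obtain ⟨ht1, ht2⟩ := ih (n+1) (by omega)
    have hYe : Yt α (1/100) 0 (k+1) n = 1/(gg α (1/100) 0 n + Yt α (1/100) 0 k (n+1)) := by
      rw [Yt]
    have hgt : 0 < gg α (1/100) 0 n + Yt α (1/100) 0 k (n+1) := by
      have : (0:ℝ) < 1/(50*α) := by positivity
      linarith
    rw [hYe]
    constructor
    · -- lower: g + t ≤ 10/9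
      rw [le_div_iff₀ hgt]
      have hsum : gg α (1/100) 0 n + Yt α (1/100) 0 k (n+1) ≤ 10/9 := by linarith
      linarith [mul_le_mul_of_nonneg_left hsum (by norm_num : (0:ℝ) ≤ 9/10)]
    · -- upper: 1 ≤ B (g + t)
      rw [div_le_iff₀ hgt]
      have hB1 : 1/(100 * aa α 3) ≤ 100/(4459 * α) := by
        rw [div_le_div_iff₀ (by nlinarith) (by positivity)]
        nlinarith
      have hBpos : (0:ℝ) ≤ 10/9 - 1/(100 * aa α 3) := by
        have : 1/(100 * aa α 3) ≤ 1/22 := by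
          apply one_div_le_one_div_of_le (by norm_num); nlinarith
        linarith
      have hkey : 1 ≤ (10/9 - 100/(4459*α)) * (1/(50*α) + 9/10) := by
        have e1 : (10/9 - 100/(4459*α)) = (44590*α - 900)/(40131*α) := by
          field_simp; ring
        have e2 : (1/(50*α) + 9/10) = (10 + 450*α)/(500*α) := by
          field_simp; ring
        rw [e1, e2, div_mul_div_comm, le_div_iff₀ (by positivity)]
        nlinarith
      have hmono1 : (10/9 - 100/(4459*α)) ≤ (10/9 - 1/(100 * aa α 3)) := by linarith
      have hsum2 : 1/(50*α) + 9/10 ≤ gg α (1/100) 0 n + Yt α (1/100) 0 k (n+1) := by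
        linarith
      have hf1 : (0:ℝ) ≤ 1/(50*α) + 9/10 := by positivity
      calc (1:ℝ) ≤ (10/9 - 100/(4459*α)) * (1/(50*α) + 9/10) := hkey
      _ ≤ (10/9 - 1/(100 * aa α 3)) * (1/(50*α) + 9/10) :=
          mul_le_mul_of_nonneg_right hmono1 hf1
      _ ≤ (10/9 - 1/(100 * aa α 3)) * (gg α (1/100) 0 n + Yt α (1/100) 0 k (n+1)) :=
          mul_le_mul_of_nonneg_left hsum2 hBpos
  
include hα1 hα2 in
lemma y3_bounds01 : 9/10 ≤ yv α (1/100) 0 3 ∧ yv α (1/100) 0 3 ≤ 10/9 := by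
  have hx3 := aa3_bounds hα1 hα2
  have htend := Yt_tendsto hα1 hα2 (lam := 1/100) (ε := 0)
    (by norm_num) (by norm_num) (n := 3) (by norm_num)
  constructor
  · exact ge_of_tendsto htend (Filter.Eventually.of_forall fun k =>
      (Yt_inv01 hα1 hα2 k 3 (by norm_num)).1)
  · have hub : (10/9 : ℝ) - 1/(100 * aa α 3) ≤ 10/9 := by
      have : (0:ℝ) < 1/(100 * aa α 3) := by
        have : (0:ℝ) < aa α 3 := by nlinarith
        positivity
      linarith
    exact le_of_tendsto htend (Filter.Eventually.of_forall fun k =>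
      le_trans (Yt_inv01 hα1 hα2 k 3 (by norm_num)).2 hub)

lemma dnn1_eq (α lam ε : ℝ) :
    dnn α lam ε 1 = (dd α lam ε 2 + aa α 2 * yv α lam ε 3) / aa α 1 := by
  rw [dnn]

lemma dnn2_eq (α lam ε : ℝ) :
    dnn α lam ε 2 = (dd α lam ε 1 * dnn α lam ε 1 + aa α 2) / aa α 0 := by
  have h0 : dnn α lam ε 0 = 1 := rfl
  show dnn α lam ε (0+2) = _
  conv_lhs => rw [dnn]
  rw [h0]
  push_cast
  norm_num

lemma dnn3_eq (α lam ε : ℝ) :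
    dnn α lam ε 3 = (dd α lam ε 0 * dnn α lam ε 2 + aa α 1 * dnn α lam ε 1) / aa α 1 := by
  show dnn α lam ε (1+2) = _
  conv_lhs => rw [dnn]
  push_cast
  norm_num
  rw [aa_even α 1]

include hα1 hα2 in
lemma Gsign_low : 0 < dnn α (1/100) 0 3 + dnn α (1/100) 0 1 := by
  have ha1l := aa1_lb hα1 hα2
  have ha1u := aa1_ub hα1 hα2
  have ha2l := aa2_lb hα1 hα2
  have ha2u := aa2_ub hα1 hα2
  have ha0l := aa0_lb hα1 hα2
  have ha0u := aa0_ub hα1 hα2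
  have ha1p : (0:ℝ) < aa α 1 := by linarith
  have ha0n : aa α 0 < 0 := by linarith
  obtain ⟨hy1, hy2⟩ := y3_bounds01 hα1 hα2
  have hd2 : dd α (1/100) 0 2 = 1/100 := dd_e0 α (1/100) 2
  have hd1 : dd α (1/100) 0 1 = 1/100 := dd_e0 α (1/100) 1
  have hd0 : dd α (1/100) 0 0 = 1/100 := dd_e0 α (1/100) 0
  set y := yv α (1/100) 0 3
  set a0 := aa α 0
  set a1 := aa α 1
  set a2 := aa α 2
  have e1 : dnn α (1/100) 0 1 = (1/100 + a2 * y) / a1 := by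
    rw [dnn1_eq, hd2]
  have hD1l : 7/10 ≤ dnn α (1/100) 0 1 := by
    rw [e1, le_div_iff₀ ha1p]
    nlinarith
  have hD1u : dnn α (1/100) 0 1 ≤ 11 := by
    rw [e1, div_le_iff₀ ha1p]
    nlinarith
  have e2 : dnn α (1/100) 0 2 = (1/100 * dnn α (1/100) 0 1 + a2) / a0 := by
    rw [dnn2_eq, hd1]
  have hnum : 0 < 1/100 * dnn α (1/100) 0 1 + a2 := by nlinarith
  have hnumu : 1/100 * dnn α (1/100) 0 1 + a2 ≤ 45/100 := by nlinarith
  have hD2l : -3 ≤ dnn α (1/100) 0 2 := by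
    rw [e2, le_div_iff_of_neg ha0n]
    nlinarith
  have hD2u : dnn α (1/100) 0 2 < 0 := by
    rw [e2]
    exact div_neg_of_pos_of_neg hnum ha0n
  have e3 : dnn α (1/100) 0 3 = (1/100 * dnn α (1/100) 0 2 + a1 * dnn α (1/100) 0 1) / a1 := by
    rw [dnn3_eq, hd0]
  rw [e3]
  rw [div_add' _ _ _ (ne_of_gt ha1p)]
  apply div_pos _ ha1p
  nlinarith

include hα1 hα2 in
lemma Gsign_high : dnn α 10 0 3 + dnn α 10 0 1 < 0 := by
  have ha1l := aa1_lb hα1 hα2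
  have ha1u := aa1_ub hα1 hα2
  have ha2l := aa2_lb hα1 hα2
  have ha2u := aa2_ub hα1 hα2
  have ha0l := aa0_lb hα1 hα2
  have ha0u := aa0_ub hα1 hα2
  have ha1p : (0:ℝ) < aa α 1 := by linarith
  have ha0n : aa α 0 < 0 := by linarith
  have hy1 : 0 < yv α 10 0 3 :=
    yv_pos hα1 hα2 (by norm_num) (le_refl (0:ℝ)) (n := 3) (by norm_num)
  have hd2 : dd α 10 0 2 = 10 := dd_e0 α 10 2
  have hd1 : dd α 10 0 1 = 10 := dd_e0 α 10 1
  have hd0 : dd α 10 0 0 = 10 := dd_e0 α 10 0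
  set y := yv α 10 0 3
  set a0 := aa α 0
  set a1 := aa α 1
  set a2 := aa α 2
  have e1 : dnn α 10 0 1 = (10 + a2 * y) / a1 := by
    rw [dnn1_eq, hd2]
  have hD1l : 41 ≤ dnn α 10 0 1 := by
    rw [e1, le_div_iff₀ ha1p]
    nlinarith
  have e2 : dnn α 10 0 2 = (10 * dnn α 10 0 1 + a2) / a0 := by
    rw [dnn2_eq, hd1]
  have hnum : 410 ≤ 10 * dnn α 10 0 1 + a2 := by nlinarith
  have hD2u : dnn α 10 0 2 ≤ -540 := by
    rw [e2, div_le_iff_of_neg ha0n]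
    nlinarith
  have e3 : dnn α 10 0 3 = (10 * dnn α 10 0 2 + a1 * dnn α 10 0 1) / a1 := by
    rw [dnn3_eq, hd0]
  rw [e3]
  have hD1u : dnn α 10 0 1 ≤ (10 + a2 * y)/a1 := le_of_eq e1
  -- dnn 3 + dnn 1 = (10*dnn2 + a1*dnn1)/a1 + dnn1
  rw [div_add' _ _ _ (ne_of_gt ha1p)]
  apply div_neg_of_neg_of_pos _ ha1p
  have hD1u2 : dnn α 10 0 1 ≤ 2000 := by
    rw [e1, div_le_iff₀ ha1p]
    have hyu : y ≤ 1 / gg α 10 0 3 := yv_le_inv hα1 hα2 (by norm_num) (le_refl 0) (by norm_num)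
    have hgl : 23/1000 ≤ gg α 10 0 3 := gg_lb hα1 hα2 (by norm_num) (le_refl 0) (by norm_num)
    have : y ≤ 1000/23 := by
      have h2 := one_div_le_one_div_of_le (show (0:ℝ) < 23/1000 by norm_num) hgl
      rw [one_div (gg α 10 0 3)] at hyu
      norm_num at h2
      linarith
    nlinarith
  nlinarith

end Signs
section Cont

variable {α : ℝ} (hα1 : 1/2 < α) (hα2 : α < 0.8469)

/-- parameter domain. -/
def Sdom : Set (ℝ × ℝ) := Icc (1/100 : ℝ) 10 ×ˢ Icc (0:ℝ) 1

lemma mem_Sdom {p : ℝ × ℝ} (hp : p ∈ Sdom) :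
    1/100 ≤ p.1 ∧ p.1 ≤ 10 ∧ 0 ≤ p.2 ∧ p.2 ≤ 1 := by
  obtain ⟨⟨h1, h2⟩, h3, h4⟩ := hp
  exact ⟨h1, h2, h3, h4⟩

lemma dd_contOn (α : ℝ) (m : ℤ) : ContinuousOn (fun p : ℝ×ℝ => dd α p.1 p.2 m) Sdom := by
  have : (fun p : ℝ×ℝ => dd α p.1 p.2 m) = fun p : ℝ×ℝ => p.1 + p.2 * ((m:ℝ)^2 + α^2) := rfl
  rw [this]
  exact (continuous_fst.add (continuous_snd.mul continuous_const)).continuousOn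

include hα1 hα2 in
lemma Yt_contOn : ∀ k : ℕ, ∀ n : ℤ, 1 ≤ n →
    ContinuousOn (fun p : ℝ×ℝ => Yt α p.1 p.2 k n) Sdom := by
  intro k
  induction k with
  | zero =>
    intro n hn
    have : (fun p : ℝ×ℝ => Yt α p.1 p.2 0 n) = fun _ => 1 := rfl
    rw [this]; exact continuousOn_const
  | succ k ih =>
    intro n hn
    have hrw : (fun p : ℝ×ℝ => Yt α p.1 p.2 (k+1) n)
        = fun p : ℝ×ℝ => 1 / (gg α p.1 p.2 n + Yt α p.1 p.2 k (n+1)) := by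
      funext p; rw [Yt]
    rw [hrw]
    have hggc : ContinuousOn (fun p : ℝ×ℝ => gg α p.1 p.2 n) Sdom := by
      have : (fun p : ℝ×ℝ => gg α p.1 p.2 n)
          = fun p : ℝ×ℝ => (dd α p.1 p.2 n) / aa α n := rfl
      rw [this]
      exact (dd_contOn α n).div_const _
    apply ContinuousOn.div continuousOn_const (hggc.add (ih (n+1) (by omega)))
    intro p hp
    obtain ⟨h1, h2, h3, h4⟩ := mem_Sdom hp
    have hg := gg_lb hα1 hα2 h1 h3 (lam := p.1) (ε := p.2) (n := n) (by omega)
    have hy := Yt_nonneg hα1 hα2 h1 h3 (lam := p.1) (ε := p.2) k (n+1) (by omega)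
    intro hzero
    simp only [Pi.add_apply] at hzero
    linarith

include hα1 hα2 in
lemma yv_unifOn :
    TendstoUniformlyOn (fun k (p : ℝ×ℝ) => Yt α p.1 p.2 k 3)
      (fun p : ℝ×ℝ => yv α p.1 p.2 3) Filter.atTop Sdom := by
  rw [Metric.tendstoUniformlyOn_iff]
  intro δ hδ
  have hgeo : Filter.Tendsto (fun k : ℕ => 100000 * (9995/10000:ℝ)^k)
      Filter.atTop (nhds 0) := by
    have h := tendsto_pow_atTop_nhds_zero_of_lt_one
      (show (0:ℝ) ≤ 9995/10000 by norm_num) (show (9995/10000:ℝ) < 1 by norm_num)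
    have h2 := h.const_mul (100000:ℝ)
    simpa using h2
  have hev : ∀ᶠ k in Filter.atTop, 100000 * (9995/10000:ℝ)^k < δ :=
    hgeo.eventually (gt_mem_nhds hδ)
  filter_upwards [hev] with k hk p hp
  obtain ⟨h1, h2, h3, h4⟩ := mem_Sdom hp
  have hd := Yt_dist_yv hα1 hα2 h1 h3 (lam := p.1) (ε := p.2) (n := 3) (by norm_num) k
  rw [dist_comm]
  exact lt_of_le_of_lt hd hk

include hα1 hα2 in
lemma y3_contOn : ContinuousOn (fun p : ℝ×ℝ => yv α p.1 p.2 3) Sdom :=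
  (yv_unifOn hα1 hα2).continuousOn
    (Filter.Eventually.of_forall fun k => Yt_contOn hα1 hα2 k 3 (by norm_num)).frequently

include hα1 hα2 in
lemma G_contOn :
    ContinuousOn (fun p : ℝ×ℝ => dnn α p.1 p.2 3 + dnn α p.1 p.2 1) Sdom := by
  have d1c : ContinuousOn (fun p : ℝ×ℝ => dnn α p.1 p.2 1) Sdom := by
    have : (fun p : ℝ×ℝ => dnn α p.1 p.2 1)
        = fun p : ℝ×ℝ => (dd α p.1 p.2 2 + aa α 2 * yv α p.1 p.2 3) / aa α 1 := by
      funext p; rw [dnn1_eq]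
    rw [this]
    exact ((dd_contOn α 2).add (continuousOn_const.mul (y3_contOn hα1 hα2))).div_const _
  have d2c : ContinuousOn (fun p : ℝ×ℝ => dnn α p.1 p.2 2) Sdom := by
    have : (fun p : ℝ×ℝ => dnn α p.1 p.2 2)
        = fun p : ℝ×ℝ => (dd α p.1 p.2 1 * dnn α p.1 p.2 1 + aa α 2) / aa α 0 := by
      funext p; rw [dnn2_eq]
    rw [this]
    exact (((dd_contOn α 1).mul d1c).add continuousOn_const).div_const _
  have d3c : ContinuousOn (fun p : ℝ×ℝ => dnn α p.1 p.2 3) Sdom := by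
    have : (fun p : ℝ×ℝ => dnn α p.1 p.2 3)
        = fun p : ℝ×ℝ => (dd α p.1 p.2 0 * dnn α p.1 p.2 2 + aa α 1 * dnn α p.1 p.2 1) / aa α 1 := by
      funext p; rw [dnn3_eq]
    rw [this]
    exact (((dd_contOn α 0).mul d2c).add (continuousOn_const.mul d1c)).div_const _
  exact d3c.add d1c

end Cont

end NSZ


/-- Persistence of the unstable eigenvalue in the zero viscosity limit on the line
`k̂ = (0,−1)` for `α ∈ (0.5, 0.8469)`: `λ(ε) → λ₀` as `ε → 0⁺`. -/
theorem unstable_eigenvalue_zero_viscosity_limit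
    (α εs l0 : ℝ) (hα : 0.5 < α ∧ α < 0.8469) (hεs : 0 < εs)
    (lam : ℝ → ℝ)
    (hlam : ∀ ε : ℝ, 0 < ε → ε < εs →
      0 < lam ε ∧ IsLineEig α ε (0, -1) ((lam ε : ℝ) : ℂ)
        ∧ ∀ μ : ℝ, 0 < μ → IsLineEig α ε (0, -1) (μ : ℂ) → μ = lam ε)
    (hl0 : 0 < l0 ∧ IsLineEig α 0 (0, -1) (l0 : ℂ)
        ∧ ∀ μ : ℝ, 0 < μ → IsLineEig α 0 (0, -1) (μ : ℂ) → μ = l0) :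
    Filter.Tendsto lam (nhdsWithin 0 (Set.Ioi 0)) (nhds l0) := by
  have hα1 : 1/2 < α := by
    have := hα.1; norm_num at this ⊢; linarith
  have hα2 : α < 0.8469 := hα.2
  set G : ℝ → ℝ → ℝ := fun l e => NSZ.dnn α l e 3 + NSZ.dnn α l e 1 with hGdef
  have hGc : ContinuousOn (fun p : ℝ × ℝ => G p.1 p.2) NSZ.Sdom := NSZ.G_contOn hα1 hα2
  have hB : ∀ l e : ℝ, 1/100 ≤ l → l ≤ 10 → 0 ≤ e → e ≤ 1 → G l e = 0 →
      IsLineEig α e (0, -1) ((l : ℝ) : ℂ) := by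
    intro l e h1 h2 h3 h4 hG0
    exact NSZ.eig_of_G hα1 hα2 h1 h3 hG0
  have hUq0 : ∀ l : ℝ, 1/100 ≤ l → l ≤ 10 → G l 0 = 0 → l = l0 := by
    intro l h1 h2 h0
    exact hl0.2.2 l (by linarith) (hB l 0 h1 h2 le_rfl zero_le_one h0)
  have hsl : 0 < G (1/100) 0 := NSZ.Gsign_low hα1 hα2
  have hsh : G 10 0 < 0 := NSZ.Gsign_high hα1 hα2
  -- continuity of l ↦ G l e on subintervals, for e ∈ [0,1]
  have hg0c : ∀ a b : ℝ, 1/100 ≤ a → b ≤ 10 → ∀ e : ℝ, 0 ≤ e → e ≤ 1 →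
      ContinuousOn (fun l => G l e) (Icc a b) := by
    intro a b ha hb e he1 he2
    apply hGc.comp (Continuous.continuousOn
      (continuous_id.prodMk continuous_const : Continuous fun l : ℝ => (l, e)))
    intro l hl
    exact ⟨⟨le_trans ha hl.1, le_trans hl.2 hb⟩, he1, he2⟩
  -- l0 is the unique zero of G · 0 in [1/100, 10], and lies strictly inside
  have hl0mem : 1/100 < l0 ∧ l0 < 10 := by
    have hIVT := intermediate_value_Icc' (by norm_num : (1/100:ℝ) ≤ 10)
      (hg0c (1/100) 10 le_rfl le_rfl 0 le_rfl zero_le_one)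
    obtain ⟨ζ, hζI, hζ⟩ := hIVT ⟨le_of_lt hsh, le_of_lt hsl⟩
    have hζl0 : ζ = l0 := hUq0 ζ hζI.1 hζI.2 hζ
    subst hζl0
    constructor
    · rcases eq_or_lt_of_le hζI.1 with h | h
      · exfalso; rw [← h] at hζ; linarith
      · exact h
    · rcases eq_or_lt_of_le hζI.2 with h | h
      · exfalso; rw [h] at hζ; linarith
      · exact h
  rw [Metric.tendsto_nhdsWithin_nhds]
  intro δ hδ
  set δ' := min (δ/2) (min ((l0 - 1/100)/2) ((10 - l0)/2)) with hδ'def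
  have hδ'pos : 0 < δ' :=
    lt_min (by linarith) (lt_min (by linarith [hl0mem.1]) (by linarith [hl0mem.2]))
  have hδ'1 : δ' ≤ δ/2 := min_le_left _ _
  have hδ'2 : δ' ≤ (l0 - 1/100)/2 := le_trans (min_le_right _ _) (min_le_left _ _)
  have hδ'3 : δ' ≤ (10 - l0)/2 := le_trans (min_le_right _ _) (min_le_right _ _)
  have hin1 : 1/100 < l0 - δ' := by linarith [hl0mem.1]
  have hin2 : l0 + δ' < 10 := by linarith [hl0mem.2]
  -- signs of G(·,0) at l0 ∓ δ'
  have hsm : 0 < G (l0 - δ') 0 := by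
    rcases lt_trichotomy (G (l0 - δ') 0) 0 with h | h | h
    · exfalso
      have hIVT := intermediate_value_Icc' (by linarith : (1/100:ℝ) ≤ l0 - δ')
        (hg0c (1/100) (l0 - δ') le_rfl (by linarith) 0 le_rfl zero_le_one)
      obtain ⟨ζ, hζI, hζ⟩ := hIVT ⟨le_of_lt h, le_of_lt hsl⟩
      have : ζ = l0 := hUq0 ζ hζI.1 (by linarith [hζI.2]) hζ
      subst this
      linarith [hζI.2]
    · exfalso
      have : l0 - δ' = l0 := hUq0 _ (by linarith) (by linarith) h
      linarith
    · exact h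
  have hsp : G (l0 + δ') 0 < 0 := by
    rcases lt_trichotomy (G (l0 + δ') 0) 0 with h | h | h
    · exact h
    · exfalso
      have : l0 + δ' = l0 := hUq0 _ (by linarith) (by linarith) h
      linarith
    · exfalso
      have hIVT := intermediate_value_Icc' (by linarith : l0 + δ' ≤ 10)
        (hg0c (l0 + δ') 10 (by linarith) le_rfl 0 le_rfl zero_le_one)
      obtain ⟨ζ, hζI, hζ⟩ := hIVT ⟨le_of_lt hsh, le_of_lt h⟩
      have : ζ = l0 := hUq0 ζ (by linarith [hζI.1]) hζI.2 hζ
      subst this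
      linarith [hζI.1]
  -- continuity in e at the two points
  have hcontm : ∀ L : ℝ, 1/100 ≤ L → L ≤ 10 →
      ContinuousOn (fun e => G L e) (Icc (0:ℝ) 1) := by
    intro L h1 h2
    apply hGc.comp (Continuous.continuousOn
      (continuous_const.prodMk continuous_id : Continuous fun e : ℝ => (L, e)))
    intro e he
    exact ⟨⟨h1, h2⟩, he⟩
  have hzero_mem : (0:ℝ) ∈ Icc (0:ℝ) 1 := ⟨le_rfl, zero_le_one⟩
  have hevm : {e : ℝ | 0 < G (l0 - δ') e} ∈ nhdsWithin 0 (Icc (0:ℝ) 1) := by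
    have ht : Filter.Tendsto (fun e => G (l0 - δ') e) (nhdsWithin 0 (Icc (0:ℝ) 1))
        (nhds (G (l0 - δ') 0)) :=
      (hcontm (l0 - δ') (by linarith) (by linarith) 0 hzero_mem)
    exact ht (lt_mem_nhds hsm)
  have hevp : {e : ℝ | G (l0 + δ') e < 0} ∈ nhdsWithin 0 (Icc (0:ℝ) 1) := by
    have ht : Filter.Tendsto (fun e => G (l0 + δ') e) (nhdsWithin 0 (Icc (0:ℝ) 1))
        (nhds (G (l0 + δ') 0)) :=
      (hcontm (l0 + δ') (by linarith) (by linarith) 0 hzero_mem)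
    exact ht (gt_mem_nhds hsp)
  rw [Metric.mem_nhdsWithin_iff] at hevm hevp
  obtain ⟨η1, hη1, hsub1⟩ := hevm
  obtain ⟨η2, hη2, hsub2⟩ := hevp
  refine ⟨min (min η1 η2) (min εs 1), lt_min (lt_min hη1 hη2) (lt_min hεs one_pos), ?_⟩
  intro x hx hdist
  have hx0 : 0 < x := hx
  rw [Real.dist_eq, sub_zero, abs_of_pos hx0] at hdist
  have hxη1 : x < η1 := lt_of_lt_of_le hdist (le_trans (min_le_left _ _) (min_le_left _ _))
  have hxη2 : x < η2 := lt_of_lt_of_le hdist (le_trans (min_le_left _ _) (min_le_right _ _))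
  have hxεs : x < εs := lt_of_lt_of_le hdist (le_trans (min_le_right _ _) (min_le_left _ _))
  have hx1 : x ≤ 1 := le_of_lt (lt_of_lt_of_le hdist (le_trans (min_le_right _ _) (min_le_right _ _)))
  have hxI : x ∈ Icc (0:ℝ) 1 := ⟨le_of_lt hx0, hx1⟩
  have hGm : 0 < G (l0 - δ') x := by
    apply hsub1
    exact ⟨by rw [Metric.mem_ball, Real.dist_eq, sub_zero, abs_of_pos hx0]; exact hxη1, hxI⟩
  have hGp : G (l0 + δ') x < 0 := by
    apply hsub2
    exact ⟨by rw [Metric.mem_ball, Real.dist_eq, sub_zero, abs_of_pos hx0]; exact hxη2, hxI⟩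
  -- IVT in l for fixed e = x
  have hψc : ContinuousOn (fun l => G l x) (Icc (l0 - δ') (l0 + δ')) :=
    hg0c (l0 - δ') (l0 + δ') (by linarith) (by linarith) x (le_of_lt hx0) hx1
  have hIVT := intermediate_value_Icc' (by linarith : l0 - δ' ≤ l0 + δ') hψc
  obtain ⟨μ, hμI, hμ0⟩ := hIVT ⟨le_of_lt hGp, le_of_lt hGm⟩
  have hμpos : 0 < μ := by
    have := hμI.1; linarith
  have hμeig := hB μ x (by linarith [hμI.1]) (by linarith [hμI.2]) (le_of_lt hx0) hx1 hμ0
  have hμlam : μ = lam x := (hlam x hx0 hxεs).2.2 μ hμpos hμeig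
  rw [Real.dist_eq, ← hμlam]
  have h1 := hμI.1
  have h2 := hμI.2
  rw [abs_lt]
  constructor <;> linarith
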